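/- Suppose f ∈ L¹((0,∞) × ℝ). Then for any δ > 0: lim_{t→∞} sup_{|y| ≤ (4−δ)t} | ∫₀ᵗ (H_{2(t−s)} * W_{4(t−s)} * f(s,·))(y) ds − (1/2)∫₀^∞∫_ℝ f(s,y) dy ds | = 0. -/

import Mathlib

open MeasureTheory

noncomputable section

/-- The heat kernel `H_t(y) = (4πt)^{-1/2} e^{-y²/(4t)}`. -/
def Hker (t y : ℝ) : ℝ := (Real.sqrt (4 * Real.pi * t))⁻¹ * Real.exp (-y ^ 2 / (4 * t))

/-- `W_t = (1/2)·1_{[-t,t]}`. -/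
def Wfun (t : ℝ) : ℝ → ℝ := Set.indicator (Set.Icc (-t) t) fun _ => (1 : ℝ) / 2

/-- `∫₀ᵗ (H_{2(t−s)} * W_{4(t−s)} * f(s,·))(y) ds`. -/
def heatWaveInt (f : ℝ → ℝ → ℝ) (t y : ℝ) : ℝ :=
  ∫ s in (0:ℝ)..t, ∫ z : ℝ, ∫ w : ℝ,
    Hker (2 * (t - s)) (y - z) * Wfun (4 * (t - s)) (z - w) * f s w

set_option maxHeartbeats 1000000

open Real Set Filter

namespace HW

lemma Hker_nonneg (t y : ℝ) : 0 ≤ Hker t y :=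
  mul_nonneg (inv_nonneg.2 (Real.sqrt_nonneg _)) (Real.exp_pos _).le

lemma Hker_eq {t : ℝ} (ht : 0 < t) (y : ℝ) :
    Hker t y = (Real.sqrt (4 * Real.pi * t))⁻¹ * Real.exp (-(4 * t)⁻¹ * y ^ 2) := by
  rw [Hker]
  congr 1
  rw [neg_div, neg_mul, inv_mul_eq_div]

lemma integrable_Hker {t : ℝ} (ht : 0 < t) : Integrable (Hker t) := by
  have hb : 0 < (4 * t)⁻¹ := by positivity
  have := (integrable_exp_neg_mul_sq hb).const_mul (Real.sqrt (4 * Real.pi * t))⁻¹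
  refine this.congr (Filter.Eventually.of_forall fun y => ?_)
  rw [Hker_eq ht]

lemma integral_Hker {t : ℝ} (ht : 0 < t) : ∫ y, Hker t y = 1 := by
  have hb : 0 < (4 * t)⁻¹ := by positivity
  have h1 : ∫ y, Hker t y = (Real.sqrt (4 * Real.pi * t))⁻¹ *
      ∫ y : ℝ, Real.exp (-(4 * t)⁻¹ * y ^ 2) := by
    rw [← integral_const_mul]
    exact integral_congr_ae (Filter.Eventually.of_forall fun y => Hker_eq ht y)
  rw [h1, integral_gaussian]
  have h2 : Real.pi / (4 * t)⁻¹ = 4 * Real.pi * t := by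
    field_simp
  rw [h2, inv_mul_cancel₀]
  have : (0:ℝ) < 4 * Real.pi * t := by positivity
  exact (Real.sqrt_ne_zero'.2 this)

lemma integral_Ioi_mul_exp {b : ℝ} (hb : 0 < b) :
    ∫ x in Ioi (0:ℝ), x * Real.exp (-b * x ^ 2) = (2 * b)⁻¹ := by
  have hderiv : ∀ x ∈ Ici (0:ℝ), HasDerivAt (fun x : ℝ => -(2 * b)⁻¹ * Real.exp (-b * x ^ 2))
      (x * Real.exp (-b * x ^ 2)) x := by
    intro x _
    have h1 : HasDerivAt (fun x : ℝ => -b * x ^ 2) (-b * (2 * x)) x := by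
      simpa using ((hasDerivAt_pow 2 x).const_mul (-b))
    have h2 := (h1.exp).const_mul (-(2 * b)⁻¹)
    refine h2.congr_deriv ?_
    have hb0 : (2 * b)⁻¹ * (2 * b) = 1 := inv_mul_cancel₀ (by positivity)
    linear_combination (x * Real.exp (-b * x ^ 2)) * hb0
  have hint : IntegrableOn (fun x : ℝ => x * Real.exp (-b * x ^ 2)) (Ioi 0) :=
    (integrable_mul_exp_neg_mul_sq hb).integrableOn
  have hlim : Tendsto (fun x : ℝ => -(2 * b)⁻¹ * Real.exp (-b * x ^ 2)) atTop (nhds 0) := by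
    have h1 : Tendsto (fun x : ℝ => -b * x ^ 2) atTop atBot := by
      apply Tendsto.const_mul_atTop_of_neg (by linarith : -b < 0)
      exact tendsto_pow_atTop (by norm_num)
    have := (Real.tendsto_exp_atBot.comp h1).const_mul (-(2 * b)⁻¹)
    simpa using this
  have := integral_Ioi_of_hasDerivAt_of_tendsto' hderiv hint hlim
  rw [this]
  norm_num

lemma integrable_abs_Hker {t : ℝ} (ht : 0 < t) : Integrable (fun y => |y| * Hker t y) := by
  have hb : 0 < (4 * t)⁻¹ := by positivity
  have h := ((integrable_mul_exp_neg_mul_sq hb).norm).const_mul (Real.sqrt (4 * Real.pi * t))⁻¹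
  refine h.congr (Filter.Eventually.of_forall fun y => ?_)
  simp only [Real.norm_eq_abs, abs_mul, abs_of_nonneg (Real.exp_pos _).le, Hker_eq ht]
  ring

lemma integral_abs_Hker {t : ℝ} (ht : 0 < t) :
    ∫ y, |y| * Hker t y = 4 * t * (Real.sqrt (4 * Real.pi * t))⁻¹ := by
  have hb : 0 < (4 * t)⁻¹ := by positivity
  have h1 : ∫ y, |y| * Hker t y = (Real.sqrt (4 * Real.pi * t))⁻¹ *
      ∫ y : ℝ, |y| * Real.exp (-(4 * t)⁻¹ * y ^ 2) := by
    rw [← integral_const_mul]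
    refine integral_congr_ae (Filter.Eventually.of_forall fun y => ?_)
    simp only [Hker_eq ht]
    ring
  have h2 : (∫ y : ℝ, |y| * Real.exp (-(4 * t)⁻¹ * y ^ 2))
      = 2 * ∫ y in Ioi (0:ℝ), y * Real.exp (-(4 * t)⁻¹ * y ^ 2) := by
    have := integral_comp_abs (f := fun y : ℝ => y * Real.exp (-(4 * t)⁻¹ * y ^ 2))
    rw [← this]
    refine integral_congr_ae (Filter.Eventually.of_forall fun y => ?_)
    simp [sq_abs]
  rw [h1, h2, integral_Ioi_mul_exp hb]
  rw [mul_inv, inv_inv]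
  ring


lemma Hker_zero {t : ℝ} (ht : t ≤ 0) : Hker t = fun _ => 0 := by
  funext y
  rw [Hker]
  have : Real.sqrt (4 * Real.pi * t) = 0 := by
    apply Real.sqrt_eq_zero_of_nonpos
    nlinarith [Real.pi_pos, mul_nonneg Real.pi_pos.le (neg_nonneg.2 ht)]
  rw [this]
  simp

lemma Wfun_nonneg (r z : ℝ) : 0 ≤ Wfun r z := by
  rw [Wfun]
  by_cases h : z ∈ Set.Icc (-r) r <;> simp [Set.indicator_apply, h]

lemma Wfun_le_half (r z : ℝ) : Wfun r z ≤ 1 / 2 := by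
  rw [Wfun]
  by_cases h : z ∈ Set.Icc (-r) r <;> simp [Set.indicator_apply, h]

lemma measurable_Wfun_uncurry : Measurable fun p : ℝ × ℝ => Wfun p.1 p.2 := by
  have : (fun p : ℝ × ℝ => Wfun p.1 p.2)
      = Set.indicator {p : ℝ × ℝ | -p.1 ≤ p.2 ∧ p.2 ≤ p.1} fun _ => (1:ℝ)/2 := by
    funext p
    rw [Wfun, Set.indicator_apply, Set.indicator_apply]
    congr 1
  rw [this]
  refine measurable_const.indicator ?_
  rw [Set.setOf_and]
  exact (measurableSet_le (measurable_fst.neg) measurable_snd).inter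
    (measurableSet_le measurable_snd measurable_fst)

lemma measurable_Wfun (r : ℝ) : Measurable (Wfun r) :=
  measurable_const.indicator measurableSet_Icc

lemma measurable_Hker_uncurry : Measurable fun p : ℝ × ℝ => Hker p.1 p.2 := by
  apply Measurable.mul
  · exact ((Real.continuous_sqrt.measurable.comp
      ((measurable_const.mul measurable_fst))).inv)
  · exact (Real.measurable_exp.comp ((measurable_snd.pow_const 2).neg.div
      (measurable_const.mul measurable_fst)))

def g (τ x : ℝ) : ℝ := ∫ z, Hker (2 * τ) (x - z) * Wfun (4 * τ) z

lemma continuous_Hker_shift {t : ℝ} (x : ℝ) : Continuous fun z => Hker t (x - z) := by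
  apply Continuous.mul continuous_const
  exact (Real.continuous_exp.comp (((continuous_const.sub continuous_id).pow 2).neg.div_const _))

lemma integrable_g_integrand {τ : ℝ} (hτ : 0 < τ) (x : ℝ) :
    Integrable fun z => Hker (2 * τ) (x - z) * Wfun (4 * τ) z := by
  apply Integrable.mono' (((integrable_Hker (by linarith : (0:ℝ) < 2 * τ)).comp_sub_left x).mul_const (1/2))
  · exact ((continuous_Hker_shift x).aestronglyMeasurable.mul
      ((measurable_Wfun _).aestronglyMeasurable))
  · refine Filter.Eventually.of_forall fun z => ?_
    rw [Real.norm_eq_abs, abs_mul, abs_of_nonneg (Hker_nonneg _ _), abs_of_nonneg (Wfun_nonneg _ _)]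
    exact mul_le_mul_of_nonneg_left (Wfun_le_half _ _) (Hker_nonneg _ _)

lemma g_nonneg (τ x : ℝ) : 0 ≤ g τ x :=
  integral_nonneg fun z => mul_nonneg (Hker_nonneg _ _) (Wfun_nonneg _ _)

lemma integral_Hker_shift {τ : ℝ} (hτ : 0 < τ) (x : ℝ) :
    ∫ z, Hker (2 * τ) (x - z) = 1 := by
  rw [integral_sub_left_eq_self (Hker (2 * τ)) volume x]
  exact integral_Hker (by linarith)

lemma g_le_half (τ x : ℝ) : g τ x ≤ 1 / 2 := by
  rcases le_or_gt τ 0 with hτ | hτ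
  · have : g τ x = 0 := by
      rw [g, Hker_zero (by linarith : 2 * τ ≤ 0)]
      simp
    rw [this]; norm_num
  · have h1 : g τ x ≤ ∫ z, Hker (2 * τ) (x - z) * (1/2) := by
      apply integral_mono (integrable_g_integrand hτ x)
        (((integrable_Hker (by linarith : (0:ℝ) < 2*τ)).comp_sub_left x).mul_const _)
      intro z
      exact mul_le_mul_of_nonneg_left (Wfun_le_half _ _) (Hker_nonneg _ _)
    calc g τ x ≤ ∫ z, Hker (2 * τ) (x - z) * (1/2) := h1
      _ = (∫ z, Hker (2 * τ) (x - z)) * (1/2) := by rw [integral_mul_const]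
      _ = 1/2 := by rw [integral_Hker_shift hτ]; ring

lemma half_sub_g_le {τ a x : ℝ} (hτ : 0 < τ) (ha : 0 < a) (hx : |x| ≤ 4 * τ - a) :
    1 / 2 - g τ x ≤ (2 * a)⁻¹ * (8 * τ * (Real.sqrt (4 * Real.pi * (2 * τ)))⁻¹) := by
  have h2τ : (0:ℝ) < 2 * τ := by linarith
  have hH : Integrable (fun z => Hker (2 * τ) (x - z)) := (integrable_Hker h2τ).comp_sub_left x
  have habs : Integrable (fun z => |x - z| * Hker (2 * τ) (x - z)) :=
    (integrable_abs_Hker h2τ).comp_sub_left x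
  have hhalf : (1:ℝ)/2 = ∫ z, Hker (2 * τ) (x - z) * (1/2) := by
    rw [integral_mul_const, integral_Hker_shift hτ]; ring
  have hsub : 1 / 2 - g τ x = ∫ z, (Hker (2 * τ) (x - z) * (1/2)
      - Hker (2 * τ) (x - z) * Wfun (4 * τ) z) := by
    rw [integral_sub (hH.mul_const _) (integrable_g_integrand hτ x), ← hhalf, g]
  rw [hsub]
  have hpt : ∀ z, Hker (2 * τ) (x - z) * (1/2) - Hker (2 * τ) (x - z) * Wfun (4 * τ) z
      ≤ (2 * a)⁻¹ * (|x - z| * Hker (2 * τ) (x - z)) := by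
    intro z
    by_cases hz : z ∈ Set.Icc (-(4 * τ)) (4 * τ)
    · have hW : Wfun (4 * τ) z = 1/2 := by rw [Wfun, Set.indicator_of_mem hz]
      rw [hW, sub_self]
      exact mul_nonneg (by positivity) (mul_nonneg (abs_nonneg _) (Hker_nonneg _ _))
    · rw [Wfun, Set.indicator_of_notMem hz, mul_zero, sub_zero]
      have hz' : 4 * τ < |z| := by
        rcases lt_or_ge z (-(4 * τ)) with h | h
        · rw [abs_of_nonpos (by nlinarith)]; linarith
        · have h2 : 4 * τ < z := by
            by_contra h2
            push_neg at h2
            exact hz ⟨h, h2⟩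
          rw [abs_of_nonneg (by nlinarith)]; exact h2
      have hdist : a ≤ |x - z| := by
        have := abs_sub_abs_le_abs_sub z x
        rw [abs_sub_comm z x] at this
        linarith [abs_nonneg x]
      have hH0 := Hker_nonneg (2 * τ) (x - z)
      have h12 : (1:ℝ)/2 ≤ (2 * a)⁻¹ * |x - z| := by
        rw [inv_mul_eq_div, le_div_iff₀ (by linarith : (0:ℝ) < 2 * a)]
        linarith
      calc Hker (2 * τ) (x - z) * (1/2) ≤ Hker (2 * τ) (x - z) * ((2 * a)⁻¹ * |x - z|) :=
            mul_le_mul_of_nonneg_left h12 hH0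
        _ = (2 * a)⁻¹ * (|x - z| * Hker (2 * τ) (x - z)) := by ring
  calc (∫ z, (Hker (2 * τ) (x - z) * (1/2) - Hker (2 * τ) (x - z) * Wfun (4 * τ) z))
      ≤ ∫ z, (2 * a)⁻¹ * (|x - z| * Hker (2 * τ) (x - z)) := by
        exact integral_mono ((hH.mul_const _).sub (integrable_g_integrand hτ x))
          (habs.const_mul _) hpt
    _ = (2 * a)⁻¹ * ∫ z, |x - z| * Hker (2 * τ) (x - z) := integral_const_mul _ _
    _ = (2 * a)⁻¹ * (8 * τ * (Real.sqrt (4 * Real.pi * (2 * τ)))⁻¹) := by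
        rw [integral_sub_left_eq_self (fun u => |u| * Hker (2 * τ) u) volume x,
          integral_abs_Hker h2τ]
        ring_nf

lemma measurable_g_uncurry : Measurable fun p : ℝ × ℝ => g p.1 p.2 := by
  have hm : StronglyMeasurable fun q : (ℝ × ℝ) × ℝ =>
      Hker (2 * q.1.1) (q.1.2 - q.2) * Wfun (4 * q.1.1) q.2 := by
    apply Measurable.stronglyMeasurable
    apply Measurable.mul
    · unfold Hker
      apply Measurable.mul
      · exact (Real.continuous_sqrt.measurable.comp
          (measurable_const.mul (measurable_const.mul measurable_fst.fst))).inv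
      · exact Real.measurable_exp.comp
          ((((measurable_fst.snd.sub measurable_snd).pow_const 2).neg).div
            (measurable_const.mul (measurable_const.mul measurable_fst.fst)))
    · have : (fun q : (ℝ × ℝ) × ℝ => Wfun (4 * q.1.1) q.2)
          = Set.indicator {q : (ℝ × ℝ) × ℝ | -(4 * q.1.1) ≤ q.2 ∧ q.2 ≤ 4 * q.1.1}
            fun _ => (1:ℝ)/2 := by
        funext q
        rw [Wfun, Set.indicator_apply, Set.indicator_apply]
        congr 1
      rw [this]
      refine measurable_const.indicator ?_
      rw [Set.setOf_and]
      exact (measurableSet_le ((measurable_const.mul measurable_fst.fst).neg) measurable_snd).inter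
        (measurableSet_le measurable_snd (measurable_const.mul measurable_fst.fst))
  exact (hm.integral_prod_right' (ν := volume)).measurable


lemma norm_Wfun_le (r z : ℝ) : ‖Wfun r z‖ ≤ 1/2 := by
  rw [Real.norm_eq_abs, abs_of_nonneg (Wfun_nonneg r z)]
  exact Wfun_le_half r z

lemma inner_fubini {τ : ℝ} (hτ : 0 < τ) (y : ℝ) {φ : ℝ → ℝ} (hφ : Integrable φ) :
    ∫ z, ∫ w, Hker (2 * τ) (y - z) * Wfun (4 * τ) (z - w) * φ w
      = ∫ w, g τ (y - w) * φ w := by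
  have h2τ : (0:ℝ) < 2 * τ := by linarith
  set F : ℝ × ℝ → ℝ := fun p => Hker (2 * τ) (y - p.1) * Wfun (4 * τ) (p.1 - p.2) * φ p.2 with hF
  -- measurability on the product
  have hFm : AEStronglyMeasurable F (volume.prod volume) := by
    apply AEStronglyMeasurable.mul
    · apply AEStronglyMeasurable.mul
      · exact ((continuous_Hker_shift y).comp continuous_fst).aestronglyMeasurable
      · exact ((measurable_Wfun (4 * τ)).comp (measurable_fst.sub measurable_snd)).aestronglyMeasurable
    · exact hφ.aestronglyMeasurable.comp_snd
  -- slice integrability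
  have hslice : ∀ z : ℝ, Integrable fun w => F (z, w) := by
    intro z
    have h1 : Integrable fun w => Wfun (4 * τ) (z - w) * φ w :=
      Integrable.bdd_mul hφ
        ((measurable_Wfun (4*τ)).comp (measurable_const.sub measurable_id)).aestronglyMeasurable
        (Filter.Eventually.of_forall fun w => norm_Wfun_le _ _)
    have := h1.const_mul (Hker (2 * τ) (y - z))
    refine this.congr (Filter.Eventually.of_forall fun w => ?_)
    simp only [hF]
    ring
  have hFi : Integrable F (volume.prod volume) := by
    rw [integrable_prod_iff hFm]
    constructor
    · exact Filter.Eventually.of_forall hslice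
    · -- z ↦ ∫ w, ‖F (z, w)‖ is integrable
      apply Integrable.mono'
        (((integrable_Hker h2τ).comp_sub_left y).mul_const ((1/2) * ∫ w, ‖φ w‖))
      · exact hFm.norm.integral_prod_right'
      · refine Filter.Eventually.of_forall fun z => ?_
        rw [Real.norm_eq_abs, abs_of_nonneg (integral_nonneg fun w => norm_nonneg _)]
        have hb : ∀ w, ‖F (z, w)‖ ≤ Hker (2 * τ) (y - z) * ((1/2) * ‖φ w‖) := by
          intro w
          simp only [hF, norm_mul]
          rw [Real.norm_eq_abs (Hker _ _), abs_of_nonneg (Hker_nonneg _ _)]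
          have h1 : ‖Wfun (4 * τ) (z - w)‖ * ‖φ w‖ ≤ (1/2) * ‖φ w‖ :=
            mul_le_mul_of_nonneg_right (norm_Wfun_le _ _) (norm_nonneg _)
          calc Hker (2*τ) (y-z) * ‖Wfun (4*τ) (z-w)‖ * ‖φ w‖
              = Hker (2*τ) (y-z) * (‖Wfun (4*τ) (z-w)‖ * ‖φ w‖) := by ring
            _ ≤ Hker (2*τ) (y-z) * ((1/2) * ‖φ w‖) :=
                mul_le_mul_of_nonneg_left h1 (Hker_nonneg _ _)
        calc (∫ w, ‖F (z, w)‖) ≤ ∫ w, Hker (2 * τ) (y - z) * ((1/2) * ‖φ w‖) :=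
              integral_mono (hslice z).norm (((hφ.norm.const_mul _).const_mul _)) hb
          _ = Hker (2 * τ) (y - z) * ((1/2) * ∫ w, ‖φ w‖) := by
              rw [integral_const_mul, integral_const_mul]
  -- swap
  have hswap := integral_integral_swap (f := fun z w => F (z, w)) hFi
  calc ∫ z, ∫ w, Hker (2 * τ) (y - z) * Wfun (4 * τ) (z - w) * φ w
      = ∫ w, ∫ z, F (z, w) := hswap
    _ = ∫ w, g τ (y - w) * φ w := by
        refine integral_congr_ae (Filter.Eventually.of_forall fun w => ?_)
        have h1 : (∫ z, F (z, w))
            = ∫ z, (fun v => Hker (2 * τ) ((y - w) - v) * Wfun (4 * τ) v) (z - w) * φ w := by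
          refine integral_congr_ae (Filter.Eventually.of_forall fun z => ?_)
          simp only [hF]
          have hyz : y - w - (z - w) = y - z := by ring
          rw [hyz]
        have h2 : (∫ z, (fun v => Hker (2 * τ) ((y - w) - v) * Wfun (4 * τ) v) (z - w) * φ w)
            = (∫ z, (fun v => Hker (2 * τ) ((y - w) - v) * Wfun (4 * τ) v) (z - w)) * φ w :=
          integral_mul_const _ _
        show (∫ z, F (z, w)) = g τ (y - w) * φ w
        rw [h1, h2,
          integral_sub_right_eq_self (fun v => Hker (2 * τ) ((y - w) - v) * Wfun (4 * τ) v) w]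
        rfl

lemma norm_g_le (τ x : ℝ) : ‖g τ x‖ ≤ 1/2 := by
  rw [Real.norm_eq_abs, abs_of_nonneg (g_nonneg τ x)]
  exact g_le_half τ x

variable {f : ℝ → ℝ → ℝ}

lemma prod_restrict_eq (s : Set ℝ) :
    (volume.restrict s).prod (volume : Measure ℝ)
      = (volume : Measure (ℝ × ℝ)).restrict (s ×ˢ univ) := by
  rw [Measure.volume_eq_prod, ← Measure.prod_restrict, Measure.restrict_univ]

lemma hf_restrict (hf : IntegrableOn (fun p : ℝ × ℝ => f p.1 p.2) (Set.Ioi 0 ×ˢ Set.univ)) :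
    Integrable (fun p : ℝ × ℝ => f p.1 p.2)
      ((volume.restrict (Ioi 0)).prod volume) := by
  rw [prod_restrict_eq]
  exact hf

lemma slice_integrable (hf : IntegrableOn (fun p : ℝ × ℝ => f p.1 p.2) (Set.Ioi 0 ×ˢ Set.univ)) :
    ∀ᵐ s ∂(volume.restrict (Ioi (0:ℝ))), Integrable (f s) := by
  have := (hf_restrict hf).prod_right_ae
  exact this

lemma g_mul_f_integrableOn
    (hf : IntegrableOn (fun p : ℝ × ℝ => f p.1 p.2) (Set.Ioi 0 ×ˢ Set.univ)) (t y : ℝ) :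
    IntegrableOn (fun p : ℝ × ℝ => g (t - p.1) (y - p.2) * f p.1 p.2)
      (Set.Ioi 0 ×ˢ Set.univ) := by
  apply Integrable.bdd_mul (c := 1/2) hf
  · exact (measurable_g_uncurry.comp
      ((measurable_const.sub measurable_fst).prodMk
        (measurable_const.sub measurable_snd))).aestronglyMeasurable
  · exact Filter.Eventually.of_forall fun p => norm_g_le _ _

lemma heatWaveInt_repr
    (hf : IntegrableOn (fun p : ℝ × ℝ => f p.1 p.2) (Set.Ioi 0 ×ˢ Set.univ))
    {t : ℝ} (ht : 0 < t) (y : ℝ) :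
    heatWaveInt f t y
      = ∫ p in Set.Ioc 0 t ×ˢ Set.univ, g (t - p.1) (y - p.2) * f p.1 p.2 := by
  rw [heatWaveInt, intervalIntegral.integral_of_le ht.le]
  have hae : ∀ᵐ s ∂(volume.restrict (Ioc (0:ℝ) t)),
      (∫ z, ∫ w, Hker (2 * (t - s)) (y - z) * Wfun (4 * (t - s)) (z - w) * f s w)
        = ∫ w, g (t - s) (y - w) * f s w := by
    have h1 : ∀ᵐ s ∂(volume.restrict (Ioc (0:ℝ) t)), Integrable (f s) :=
      ae_restrict_of_ae_restrict_of_subset Ioc_subset_Ioi_self (slice_integrable hf)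
    have h2 : ∀ᵐ s ∂(volume.restrict (Ioc (0:ℝ) t)), s ≠ t := by
      refine Filter.Eventually.filter_mono (ae_mono Measure.restrict_le_self) ?_
      rw [ae_iff]
      have : {s : ℝ | ¬ s ≠ t} = {t} := by ext s; simp
      rw [this]
      exact Real.volume_singleton
    have h3 : ∀ᵐ s ∂(volume.restrict (Ioc (0:ℝ) t)), s ∈ Ioc 0 t :=
      ae_restrict_mem measurableSet_Ioc
    filter_upwards [h1, h2, h3] with s hsi hne hmem
    exact inner_fubini (by rcases hmem with ⟨_, h⟩; cases lt_or_eq_of_le h with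
      | inl h => linarith
      | inr h => exact absurd h hne) y hsi
  rw [integral_congr_ae hae]
  have hint : Integrable (fun p : ℝ × ℝ => g (t - p.1) (y - p.2) * f p.1 p.2)
      ((volume.restrict (Ioc (0:ℝ) t)).prod volume) := by
    rw [prod_restrict_eq]
    exact (g_mul_f_integrableOn hf t y).mono_set
      (Set.prod_mono Ioc_subset_Ioi_self (subset_refl _))
  rw [← prod_restrict_eq (Ioc (0:ℝ) t), integral_prod _ hint]


lemma eight_tau {τ : ℝ} (hτ : 0 < τ) :
    8 * τ * (Real.sqrt (4 * Real.pi * (2 * τ)))⁻¹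
      = Real.sqrt (8 / Real.pi) * Real.sqrt τ := by
  have hπ := Real.pi_pos
  have hs : 4 * Real.pi * (2 * τ) = 8 * Real.pi * τ := by ring
  have h8 : (0:ℝ) < 8 * Real.pi * τ := by positivity
  have hkey : Real.sqrt (8 / Real.pi) * Real.sqrt τ * Real.sqrt (8 * Real.pi * τ)
      = 8 * τ := by
    rw [← Real.sqrt_mul (by positivity), ← Real.sqrt_mul (by positivity),
      show 8 / Real.pi * τ * (8 * Real.pi * τ) = (8 * τ) ^ 2 by field_simp]
    exact Real.sqrt_sq (by positivity)
  rw [hs, show 8 * τ * (Real.sqrt (8 * Real.pi * τ))⁻¹ = 8 * τ / Real.sqrt (8 * Real.pi * τ)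
    by ring, div_eq_iff (ne_of_gt (Real.sqrt_pos.2 h8))]
  linarith

lemma gsub_bound {t R δ y : ℝ} (hδ : 0 < δ) (hR : 1 ≤ R) (htR : R + 1 ≤ t)
    (ht10 : 10 * R / δ ≤ t) (hy : |y| ≤ (4 - δ) * t) {p : ℝ × ℝ}
    (hp : p ∈ Set.Ioc (0:ℝ) R ×ˢ Set.Icc (-R) R) :
    |g (t - p.1) (y - p.2) - 1 / 2|
      ≤ (δ * t)⁻¹ * (Real.sqrt (8 / Real.pi) * Real.sqrt t) := by
  obtain ⟨hp1, hp2⟩ := hp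
  rw [Set.mem_Ioc] at hp1
  rw [Set.mem_Icc] at hp2
  have ht0 : (0:ℝ) < t := by linarith
  have hτpos : 0 < t - p.1 := by linarith
  have hτle : t - p.1 ≤ t := by linarith [hp1.1]
  have ha : 0 < δ * t / 2 := by positivity
  have hx : |y - p.2| ≤ 4 * (t - p.1) - δ * t / 2 := by
    have h1 : |y - p.2| ≤ |y| + |p.2| := abs_sub _ _
    have h2 : |p.2| ≤ R := abs_le.2 ⟨hp2.1, hp2.2⟩
    have h3 : 5 * R ≤ δ * t / 2 := by
      rw [div_le_iff₀ hδ] at ht10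
      linarith
    nlinarith [hp1.2]
  have hb := half_sub_g_le hτpos ha hx
  rw [eight_tau hτpos] at hb
  have habs : |g (t - p.1) (y - p.2) - 1 / 2| = 1 / 2 - g (t - p.1) (y - p.2) := by
    rw [abs_sub_comm, abs_of_nonneg (by linarith [g_le_half (t - p.1) (y - p.2)])]
  rw [habs]
  have h2a : 2 * (δ * t / 2) = δ * t := by ring
  rw [h2a] at hb
  calc 1 / 2 - g (t - p.1) (y - p.2)
      ≤ (δ * t)⁻¹ * (Real.sqrt (8 / Real.pi) * Real.sqrt (t - p.1)) := hb
    _ ≤ (δ * t)⁻¹ * (Real.sqrt (8 / Real.pi) * Real.sqrt t) := by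
        apply mul_le_mul_of_nonneg_left _ (by positivity)
        exact mul_le_mul_of_nonneg_left (Real.sqrt_le_sqrt hτle) (Real.sqrt_nonneg _)


end HW

open HW in
/-- Inside the cone `|y| ≤ (4−δ)t`, the iterated heat-wave convolution of an integrable
function converges uniformly to half of its total integral. -/
theorem heatWaveInt_limit_inside (f : ℝ → ℝ → ℝ)
    (hf : IntegrableOn (fun p : ℝ × ℝ => f p.1 p.2) (Set.Ioi 0 ×ˢ Set.univ)) :
    ∀ δ : ℝ, 0 < δ → ∀ ε : ℝ, 0 < ε → ∃ T : ℝ, ∀ t : ℝ, T ≤ t →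
      ∀ y : ℝ, |y| ≤ (4 - δ) * t →
        |heatWaveInt f t y - 1 / 2 * ∫ s in Set.Ioi (0:ℝ), ∫ w : ℝ, f s w| < ε := by
  intro δ hδ ε hε
  have hπ := Real.pi_pos
  have hΩmeas : MeasurableSet (Ioi (0:ℝ) ×ˢ (univ : Set ℝ)) :=
    measurableSet_Ioi.prod MeasurableSet.univ
  set I := ∫ p in Ioi (0:ℝ) ×ˢ (univ : Set ℝ), ‖f p.1 p.2‖ with hIdef
  have hI0 : 0 ≤ I := setIntegral_nonneg hΩmeas fun _ _ => norm_nonneg _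
  have hnormint : IntegrableOn (fun p : ℝ × ℝ => ‖f p.1 p.2‖) (Ioi (0:ℝ) ×ˢ univ) := hf.norm
  -- choose R
  have hmono : Monotone fun n : ℕ => Ioc (0:ℝ) n ×ˢ Icc (-(n:ℝ)) n := by
    intro m n hmn
    have h : (m:ℝ) ≤ n := Nat.cast_le.2 hmn
    exact Set.prod_mono (Ioc_subset_Ioc_right h) (Icc_subset_Icc (by linarith) h)
  have hmeas : ∀ n : ℕ, MeasurableSet (Ioc (0:ℝ) n ×ˢ Icc (-(n:ℝ)) n) := fun n =>
    measurableSet_Ioc.prod measurableSet_Icc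
  have hunion : (⋃ n : ℕ, Ioc (0:ℝ) n ×ˢ Icc (-(n:ℝ)) n) = Ioi (0:ℝ) ×ˢ univ := by
    ext p
    simp only [mem_iUnion, Set.mem_prod, mem_Ioc, mem_Icc, mem_Ioi, mem_univ, and_true]
    constructor
    · rintro ⟨n, ⟨h1, _⟩, _⟩; exact h1
    · intro h1
      obtain ⟨n, hn⟩ := exists_nat_ge (max p.1 |p.2|)
      have hn1 : p.1 ≤ n := le_trans (le_max_left _ _) hn
      have hn2 : |p.2| ≤ n := le_trans (le_max_right _ _) hn
      rw [abs_le] at hn2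
      exact ⟨n, ⟨h1, hn1⟩, hn2.1, hn2.2⟩
  have htend := tendsto_setIntegral_of_monotone hmeas hmono
    (by rw [hunion]; exact hnormint)
  rw [hunion] at htend
  have hev : ∀ᶠ n : ℕ in atTop,
      dist (∫ p in Ioc (0:ℝ) n ×ˢ Icc (-(n:ℝ)) n, ‖f p.1 p.2‖) I < ε / 4 :=
    htend (Metric.ball_mem_nhds I (by positivity))
  obtain ⟨n, hn⟩ := hev.exists
  set R : ℝ := max (n:ℝ) 1 with hRdef
  have hR1 : 1 ≤ R := le_max_right _ _
  have hR0 : 0 < R := by linarith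
  set SR := Ioc (0:ℝ) R ×ˢ Icc (-R) R with hSRdef
  have hSRmeas : MeasurableSet SR := measurableSet_Ioc.prod measurableSet_Icc
  have hSRsub : SR ⊆ Ioi (0:ℝ) ×ˢ univ :=
    Set.prod_mono Ioc_subset_Ioi_self (subset_univ _)
  have hRtail : ∫ p in (Ioi (0:ℝ) ×ˢ univ) \ SR, ‖f p.1 p.2‖ < ε / 4 := by
    rw [integral_diff hSRmeas hnormint hSRsub]
    have h1 : ∫ p in Ioc (0:ℝ) n ×ˢ Icc (-(n:ℝ)) n, ‖f p.1 p.2‖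
        ≤ ∫ p in SR, ‖f p.1 p.2‖ := by
      apply setIntegral_mono_set (hnormint.mono_set hSRsub)
        (Filter.Eventually.of_forall fun p => norm_nonneg _)
      exact HasSubset.Subset.eventuallyLE
        (Set.prod_mono (Ioc_subset_Ioc_right (le_max_left _ _))
          (Icc_subset_Icc (neg_le_neg (le_max_left _ _)) (le_max_left _ _)))
    rw [Real.dist_eq] at hn
    have h2 := abs_lt.1 hn
    linarith [h2.1]
  -- choose T
  set η := ε / (4 * (I + 1)) with hηdef
  have hη : 0 < η := by positivity
  set T := max (max (10 * R / δ) (8 / (Real.pi * (η * δ) ^ 2))) (R + 1) with hTdef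
  refine ⟨T, fun t ht y hy => ?_⟩
  have htR : R + 1 ≤ t := le_trans (le_max_right _ _) ht
  have ht10 : 10 * R / δ ≤ t := le_trans (le_trans (le_max_left _ _) (le_max_left _ _)) ht
  have htη : 8 / (Real.pi * (η * δ) ^ 2) ≤ t :=
    le_trans (le_trans (le_max_right _ _) (le_max_left _ _)) ht
  have ht0 : (0:ℝ) < t := by linarith
  -- uniform bound on SR
  have hgb : ∀ p ∈ SR, |g (t - p.1) (y - p.2) - 1 / 2| ≤ η := by
    intro p hp
    have h1 := gsub_bound hδ hR1 htR ht10 hy hp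
    have h2 : Real.sqrt (8 / Real.pi) * Real.sqrt t ≤ η * δ * t := by
      have h3 : 8 / Real.pi * t ≤ (η * δ * t) ^ 2 := by
        rw [div_le_iff₀ (by positivity : (0:ℝ) < Real.pi * (η * δ) ^ 2)] at htη
        rw [div_mul_eq_mul_div, div_le_iff₀ hπ]
        nlinarith [mul_le_mul_of_nonneg_right htη ht0.le]
      calc Real.sqrt (8 / Real.pi) * Real.sqrt t
          = Real.sqrt (8 / Real.pi * t) := (Real.sqrt_mul (by positivity) _).symm
        _ ≤ Real.sqrt ((η * δ * t) ^ 2) := Real.sqrt_le_sqrt h3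
        _ = η * δ * t := Real.sqrt_sq (by positivity)
    have h4 : (δ * t)⁻¹ * (Real.sqrt (8 / Real.pi) * Real.sqrt t) ≤ η := by
      rw [inv_mul_eq_div, div_le_iff₀ (by positivity : (0:ℝ) < δ * t)]
      calc Real.sqrt (8 / Real.pi) * Real.sqrt t ≤ η * δ * t := h2
        _ = η * (δ * t) := by ring
    linarith
  -- rewrite the two quantities
  rw [heatWaveInt_repr hf ht0 y]
  have hval : 1 / 2 * (∫ s in Set.Ioi (0:ℝ), ∫ w : ℝ, f s w)
      = ∫ p in Ioi (0:ℝ) ×ˢ (univ : Set ℝ), 1 / 2 * f p.1 p.2 := by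
    rw [integral_const_mul]
    congr 1
    rw [← prod_restrict_eq, integral_prod _ (hf_restrict hf)]
  rw [hval]
  -- split the reference integral over A and its complement
  set A := Ioc (0:ℝ) t ×ˢ (univ : Set ℝ) with hAdef
  have hAmeas : MeasurableSet A := measurableSet_Ioc.prod MeasurableSet.univ
  have hAsub : A ⊆ Ioi (0:ℝ) ×ˢ univ :=
    Set.prod_mono Ioc_subset_Ioi_self (subset_refl _)
  have hhalf_int : IntegrableOn (fun p : ℝ × ℝ => 1 / 2 * f p.1 p.2)
      (Ioi (0:ℝ) ×ˢ univ) := hf.const_mul _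
  have hdiff := integral_diff hAmeas hhalf_int hAsub
  have hgint : IntegrableOn (fun p : ℝ × ℝ => g (t - p.1) (y - p.2) * f p.1 p.2)
      (Ioi (0:ℝ) ×ˢ univ) := g_mul_f_integrableOn hf t y
  have hsubint : IntegrableOn
      (fun p : ℝ × ℝ => (g (t - p.1) (y - p.2) - 1 / 2) * f p.1 p.2)
      (Ioi (0:ℝ) ×ˢ univ) := by
    have := hgint.sub hhalf_int
    refine this.congr (Filter.Eventually.of_forall fun p => ?_)
    simp only [Pi.sub_apply]
    ring
  have hArepr : (∫ p in A, g (t - p.1) (y - p.2) * f p.1 p.2)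
      - ∫ p in A, 1 / 2 * f p.1 p.2
      = ∫ p in A, (g (t - p.1) (y - p.2) - 1 / 2) * f p.1 p.2 := by
    rw [← integral_sub (hgint.mono_set hAsub) (hhalf_int.mono_set hAsub)]
    refine integral_congr_ae (Filter.Eventually.of_forall fun p => ?_)
    ring
  have hkey : (∫ p in A, g (t - p.1) (y - p.2) * f p.1 p.2)
      - ∫ p in Ioi (0:ℝ) ×ˢ (univ : Set ℝ), 1 / 2 * f p.1 p.2
      = (∫ p in A, (g (t - p.1) (y - p.2) - 1 / 2) * f p.1 p.2)
        - ∫ p in (Ioi (0:ℝ) ×ˢ univ) \ A, 1 / 2 * f p.1 p.2 := by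
    rw [← hArepr]
    linarith [hdiff]
  rw [hkey]
  -- now the three bounds
  have hsubnorm : IntegrableOn
      (fun p : ℝ × ℝ => ‖(g (t - p.1) (y - p.2) - 1 / 2) * f p.1 p.2‖)
      (Ioi (0:ℝ) ×ˢ univ) := hsubint.norm
  have hSR_A : SR ⊆ A :=
    Set.prod_mono (Ioc_subset_Ioc_right (by linarith)) (subset_univ _)
  -- bound term 2 : over A
  have hnorm1 : ∫ p in A, ‖(g (t - p.1) (y - p.2) - 1 / 2) * f p.1 p.2‖
      = (∫ p in SR, ‖(g (t - p.1) (y - p.2) - 1 / 2) * f p.1 p.2‖)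
        + ∫ p in A \ SR, ‖(g (t - p.1) (y - p.2) - 1 / 2) * f p.1 p.2‖ := by
    have := integral_diff hSRmeas (hsubnorm.mono_set hAsub) hSR_A
    linarith
  have hb1 : ∫ p in SR, ‖(g (t - p.1) (y - p.2) - 1 / 2) * f p.1 p.2‖ ≤ ε / 4 := by
    have h1 : ∫ p in SR, ‖(g (t - p.1) (y - p.2) - 1 / 2) * f p.1 p.2‖
        ≤ ∫ p in SR, η * ‖f p.1 p.2‖ := by
      apply setIntegral_mono_on (hsubnorm.mono_set hSRsub)
        ((hnormint.mono_set hSRsub).const_mul _) hSRmeas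
      intro p hp
      rw [norm_mul]
      exact mul_le_mul_of_nonneg_right
        (by rw [Real.norm_eq_abs]; exact hgb p hp) (norm_nonneg _)
    have h2 : ∫ p in SR, η * ‖f p.1 p.2‖ = η * ∫ p in SR, ‖f p.1 p.2‖ :=
      integral_const_mul _ _
    have h3 : ∫ p in SR, ‖f p.1 p.2‖ ≤ I := by
      apply setIntegral_mono_set hnormint
        (Filter.Eventually.of_forall fun p => norm_nonneg _)
        (HasSubset.Subset.eventuallyLE hSRsub)
    have h4 : η * ∫ p in SR, ‖f p.1 p.2‖ ≤ η * I :=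
      mul_le_mul_of_nonneg_left h3 hη.le
    have h5 : η * I ≤ ε / 4 := by
      rw [hηdef]
      rw [div_mul_eq_mul_div, div_le_div_iff₀ (by positivity) (by norm_num)]
      nlinarith
    linarith
  have htail_int : IntegrableOn (fun p : ℝ × ℝ => ‖f p.1 p.2‖)
      ((Ioi (0:ℝ) ×ˢ univ) \ SR) := hnormint.mono_set (diff_subset)
  have hb2 : ∫ p in A \ SR, ‖(g (t - p.1) (y - p.2) - 1 / 2) * f p.1 p.2‖ < ε / 4 := by
    have h1 : ∫ p in A \ SR, ‖(g (t - p.1) (y - p.2) - 1 / 2) * f p.1 p.2‖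
        ≤ ∫ p in A \ SR, ‖f p.1 p.2‖ := by
      apply setIntegral_mono_on (hsubnorm.mono_set fun p hp => hAsub hp.1)
        (hnormint.mono_set fun p hp => hAsub hp.1) (hAmeas.diff hSRmeas)
      intro p hp
      rw [norm_mul]
      have hg1 : ‖g (t - p.1) (y - p.2) - 1 / 2‖ ≤ 1 := by
        rw [Real.norm_eq_abs, abs_sub_comm,
          abs_of_nonneg (by linarith [g_le_half (t - p.1) (y - p.2)])]
        linarith [g_nonneg (t - p.1) (y - p.2)]
      nlinarith [norm_nonneg (f p.1 p.2)]
    have h2 : ∫ p in A \ SR, ‖f p.1 p.2‖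
        ≤ ∫ p in (Ioi (0:ℝ) ×ˢ univ) \ SR, ‖f p.1 p.2‖ := by
      apply setIntegral_mono_set htail_int
        (Filter.Eventually.of_forall fun p => norm_nonneg _)
      exact HasSubset.Subset.eventuallyLE
        (fun p hp => ⟨hAsub hp.1, hp.2⟩)
    linarith
  have hb3 : |∫ p in (Ioi (0:ℝ) ×ˢ univ) \ A, 1 / 2 * f p.1 p.2| < ε / 4 := by
    have h0 : |∫ p in (Ioi (0:ℝ) ×ˢ univ) \ A, 1 / 2 * f p.1 p.2|
        ≤ ∫ p in (Ioi (0:ℝ) ×ˢ univ) \ A, ‖1 / 2 * f p.1 p.2‖ := by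
      rw [← Real.norm_eq_abs]
      exact norm_integral_le_integral_norm _
    have h1 : ∫ p in (Ioi (0:ℝ) ×ˢ univ) \ A, ‖1 / 2 * f p.1 p.2‖
        ≤ ∫ p in (Ioi (0:ℝ) ×ˢ univ) \ A, ‖f p.1 p.2‖ := by
      apply setIntegral_mono_on
        ((hhalf_int.mono_set diff_subset).norm)
        (hnormint.mono_set diff_subset) (hΩmeas.diff hAmeas)
      intro p _
      rw [norm_mul]
      have hh : ‖(1:ℝ)/2‖ = 1/2 := by rw [Real.norm_eq_abs]; norm_num
      nlinarith [norm_nonneg (f p.1 p.2), hh]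
    have h2 : ∫ p in (Ioi (0:ℝ) ×ˢ univ) \ A, ‖f p.1 p.2‖
        ≤ ∫ p in (Ioi (0:ℝ) ×ˢ univ) \ SR, ‖f p.1 p.2‖ := by
      apply setIntegral_mono_set htail_int
        (Filter.Eventually.of_forall fun p => norm_nonneg _)
      exact HasSubset.Subset.eventuallyLE
        (fun p hp => ⟨hp.1, fun hmem => hp.2 (hSR_A hmem)⟩)
    linarith
  have hterm2 : |∫ p in A, (g (t - p.1) (y - p.2) - 1 / 2) * f p.1 p.2| < ε / 2 := by
    have h0 : |∫ p in A, (g (t - p.1) (y - p.2) - 1 / 2) * f p.1 p.2|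
        ≤ ∫ p in A, ‖(g (t - p.1) (y - p.2) - 1 / 2) * f p.1 p.2‖ := by
      rw [← Real.norm_eq_abs]
      exact norm_integral_le_integral_norm _
    rw [hnorm1] at h0
    linarith
  calc |(∫ p in A, (g (t - p.1) (y - p.2) - 1 / 2) * f p.1 p.2)
      - ∫ p in (Ioi (0:ℝ) ×ˢ univ) \ A, 1 / 2 * f p.1 p.2|
      ≤ |∫ p in A, (g (t - p.1) (y - p.2) - 1 / 2) * f p.1 p.2|
        + |∫ p in (Ioi (0:ℝ) ×ˢ univ) \ A, 1 / 2 * f p.1 p.2| := abs_sub _ _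
    _ < ε / 2 + ε / 4 := add_lt_add hterm2 hb3
    _ < ε := by linarith

end
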